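/- Let (Ω, 𝓕, ℙ) be a probability space and let L∞(ℙ) be the Banach lattice of (equivalence classes of) essentially bounded real-valued random variables with the essential sup norm, with unit e the a.s. constant function 1. Let Δ(ℙ) be the set of continuous linear functionals p on L∞(ℙ) such that p(e) = 1 and p(X) ≥ 0 whenever X ≥ 0 a.s. Let μ : L∞(ℙ) → ℝ be a risk measure, i.e., μ(X) ≥ μ(Y) whenever X ≤ Y a.s., and μ(X + λe) = μ(X) − λ for all λ ∈ ℝ. Then for every X ∈ L∞(ℙ), μ(X) = min_{Y ∈ L∞(ℙ), μ(Y) = 0} max_{p ∈ Δ(ℙ)} p(Y − X), both the minimum (over Y with μ(Y)=0) and the maximum being attained. -/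

import Mathlib

open MeasureTheory

open scoped ENNReal NNReal

-- a.e. norm bound for L∞ functions
lemma linf_ae_bound {Ω : Type*} [MeasurableSpace Ω] {ℙ : Measure Ω}
    (f : Lp ℝ ⊤ ℙ) : ∀ᵐ ω ∂ℙ, ‖f ω‖ ≤ ‖f‖ := by
  have h := ae_le_eLpNormEssSup (f := (f : Ω → ℝ)) (μ := ℙ)
  have hne : eLpNormEssSup (f : Ω → ℝ) ℙ ≠ ⊤ := by
    have := Lp.eLpNorm_ne_top f
    rwa [eLpNorm_exponent_top] at this
  filter_upwards [h] with ω hω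
  rw [Lp.norm_def, eLpNorm_exponent_top]
  have : (‖f ω‖₊ : ℝ≥0∞).toReal ≤ (eLpNormEssSup (f : Ω → ℝ) ℙ).toReal :=
    ENNReal.toReal_mono hne hω
  simpa using this

-- integrability
lemma linf_integrable {Ω : Type*} [MeasurableSpace Ω] {ℙ : Measure Ω} [IsProbabilityMeasure ℙ]
    (f : Lp ℝ ⊤ ℙ) : Integrable (f : Ω → ℝ) ℙ :=
  (Lp.memLp f).integrable le_top

lemma exists_functional {Ω : Type*} [MeasurableSpace Ω] (ℙ : Measure Ω) [IsProbabilityMeasure ℙ]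
    {A : Set Ω} (h0 : ℙ A ≠ 0) :
    ∃ p : Lp ℝ ⊤ ℙ →L[ℝ] ℝ,
      ∀ W : Lp ℝ ⊤ ℙ, p W = (ℙ A).toReal⁻¹ * ∫ ω in A, W ω ∂ℙ := by
  have hfin : ℙ A < ⊤ := (measure_lt_top ℙ A)
  have htR : (ℙ A).toReal ≠ 0 := by
    simp [ENNReal.toReal_eq_zero_iff, h0, hfin.ne]
  have htRpos : 0 < (ℙ A).toReal := lt_of_le_of_ne ENNReal.toReal_nonneg (Ne.symm htR)
  set L : Lp ℝ ⊤ ℙ →ₗ[ℝ] ℝ :=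
    { toFun := fun W => (ℙ A).toReal⁻¹ * ∫ ω in A, W ω ∂ℙ
      map_add' := by
        intro W V
        have h1 : ∫ ω in A, (↑↑(W + V) : Ω → ℝ) ω ∂ℙ
            = ∫ ω in A, (W ω + V ω) ∂ℙ := by
          refine integral_congr_ae (ae_restrict_of_ae ?_)
          filter_upwards [Lp.coeFn_add W V] with ω hω using hω
        have h2 : ∫ ω in A, (W ω + V ω) ∂ℙ
            = (∫ ω in A, W ω ∂ℙ) + ∫ ω in A, V ω ∂ℙ :=
          integral_add (linf_integrable W).integrableOn (linf_integrable V).integrableOn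
        rw [h1, h2]; ring
      map_smul' := by
        intro c W
        have h1 : ∫ ω in A, (↑↑(c • W) : Ω → ℝ) ω ∂ℙ
            = ∫ ω in A, c * W ω ∂ℙ := by
          refine integral_congr_ae (ae_restrict_of_ae ?_)
          filter_upwards [Lp.coeFn_smul c W] with ω hω
          simpa using hω
        simp only [RingHom.id_apply, smul_eq_mul]
        rw [h1, integral_const_mul]; ring }
  refine ⟨L.mkContinuous 1 ?_, fun W => rfl⟩
  intro W
  have hb : ‖∫ ω in A, W ω ∂ℙ‖ ≤ ‖W‖ * (ℙ A).toReal :=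
    norm_setIntegral_le_of_norm_le_const_ae hfin
      (ae_restrict_of_ae (linf_ae_bound W))
  have : ‖L W‖ ≤ (ℙ A).toReal⁻¹ * (‖W‖ * (ℙ A).toReal) := by
    have hL : L W = (ℙ A).toReal⁻¹ * ∫ ω in A, W ω ∂ℙ := rfl
    rw [hL, norm_mul, Real.norm_eq_abs, abs_of_nonneg (inv_nonneg.mpr ENNReal.toReal_nonneg)]
    exact mul_le_mul_of_nonneg_left hb (inv_nonneg.mpr ENNReal.toReal_nonneg)
  calc ‖L W‖ ≤ (ℙ A).toReal⁻¹ * (‖W‖ * (ℙ A).toReal) := this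
    _ = 1 * ‖W‖ := by field_simp

lemma exists_functional' {Ω : Type*} [MeasurableSpace Ω] (ℙ : Measure Ω) [IsProbabilityMeasure ℙ]
    (e : Lp ℝ ⊤ ℙ) (he : e = MemLp.toLp (fun _ : Ω => (1 : ℝ)) (memLp_const 1))
    {A : Set Ω} (h0 : ℙ A ≠ 0) :
    ∃ p : Lp ℝ ⊤ ℙ →L[ℝ] ℝ,
      (p e = 1 ∧ ∀ Z : Lp ℝ ⊤ ℙ, 0 ≤ Z → 0 ≤ p Z) ∧
      ∀ W : Lp ℝ ⊤ ℙ, p W = (ℙ A).toReal⁻¹ * ∫ ω in A, W ω ∂ℙ := by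
  obtain ⟨p, hp⟩ := exists_functional ℙ h0
  have hfin : ℙ A < ⊤ := measure_lt_top ℙ A
  have htR : (ℙ A).toReal ≠ 0 := by
    simp [ENNReal.toReal_eq_zero_iff, h0, hfin.ne]
  have hecoe : (e : Ω → ℝ) =ᵐ[ℙ] fun _ => (1 : ℝ) := by
    rw [he]; exact MemLp.coeFn_toLp _
  refine ⟨p, ⟨?_, ?_⟩, hp⟩
  · rw [hp e]
    have h1 : ∫ ω in A, e ω ∂ℙ = ∫ _ω in A, (1 : ℝ) ∂ℙ :=
      integral_congr_ae (ae_restrict_of_ae hecoe)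
    rw [h1, setIntegral_const]
    simp [Measure.real, htR]
  · intro Z hZ
    rw [hp Z]
    have hZae : 0 ≤ᵐ[ℙ] (Z : Ω → ℝ) := (Lp.coeFn_nonneg Z).mpr hZ
    have : 0 ≤ ∫ ω in A, Z ω ∂ℙ :=
      integral_nonneg_of_ae (ae_restrict_of_ae hZae)
    positivity

/-- Let `(Ω, 𝓕, ℙ)` be a probability space, `L∞(ℙ)` the space of essentially
bounded random variables with unit `e` (the a.s. constant `1`), and `Δ(ℙ)` the set of
continuous linear functionals `p` with `p e = 1` and `p X ≥ 0` whenever `X ≥ 0` a.s.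
If `ρ : L∞(ℙ) → ℝ` is a risk measure, then for every `X`,
`ρ X = min_{Y : ρ Y = 0} max_{p ∈ Δ(ℙ)} p (Y - X)`, both the minimum and maximum being
attained. -/
theorem stmt14 {Ω : Type*} [MeasurableSpace Ω] (ℙ : Measure Ω) [IsProbabilityMeasure ℙ]
    (e : Lp ℝ ⊤ ℙ) (he : e = MemLp.toLp (fun _ : Ω => (1 : ℝ)) (memLp_const 1))
    (ρ : Lp ℝ ⊤ ℙ → ℝ)
    (hmono : ∀ X Y : Lp ℝ ⊤ ℙ, X ≤ Y → ρ Y ≤ ρ X)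
    (hadd : ∀ (X : Lp ℝ ⊤ ℙ) (c : ℝ), ρ (X + c • e) = ρ X - c) :
    ∀ X : Lp ℝ ⊤ ℙ,
      IsLeast {r : ℝ | ∃ Y : Lp ℝ ⊤ ℙ, ρ Y = 0 ∧
        IsGreatest {s : ℝ | ∃ p : Lp ℝ ⊤ ℙ →L[ℝ] ℝ,
          (p e = 1 ∧ ∀ Z : Lp ℝ ⊤ ℙ, 0 ≤ Z → 0 ≤ p Z) ∧ s = p (Y - X)} r} (ρ X) := by
  intro X
  have hecoe : (e : Ω → ℝ) =ᵐ[ℙ] fun _ => (1 : ℝ) := by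
    rw [he]; exact MemLp.coeFn_toLp _
  constructor
  · -- membership: Y = X + ρ X • e
    refine ⟨X + ρ X • e, by simpa using hadd X (ρ X), ?_⟩
    have hYX : X + ρ X • e - X = ρ X • e := by abel
    constructor
    · obtain ⟨p, hpΔ, _⟩ := exists_functional' ℙ e he (A := Set.univ) (by simp)
      refine ⟨p, hpΔ, ?_⟩
      rw [hYX, ContinuousLinearMap.map_smul, hpΔ.1]
      simp
    · rintro s ⟨p, ⟨hpe, _⟩, rfl⟩
      rw [hYX, ContinuousLinearMap.map_smul, hpe]
      simp
  · -- lower bound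
    rintro r ⟨Y, hY0, hG⟩
    refine le_of_forall_pos_le_add ?_
    intro ε hε
    set c : ℝ := ρ X - ε with hc
    set Z := Y - X with hZdef
    set A : Set Ω := {ω | c < Z ω} with hA
    have h0 : ℙ A ≠ 0 := by
      intro h0
      have hae : ∀ᵐ ω ∂ℙ, Z ω ≤ c := by
        rw [ae_iff]
        convert h0 using 2
        ext ω
        simp [hA, not_le]
      have hle : Y ≤ X + c • e := by
        rw [← Lp.coeFn_le]
        filter_upwards [hae, Lp.coeFn_sub Y X, Lp.coeFn_add X (c • e),
          Lp.coeFn_smul c e, hecoe] with ω h1 h2 h3 h4 h5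
        rw [hZdef] at h1
        rw [h2] at h1
        rw [h3, Pi.add_apply, h4, Pi.smul_apply, h5]
        simp only [smul_eq_mul, mul_one]
        simp only [Pi.sub_apply] at h1
        linarith
      have := hmono Y (X + c • e) hle
      rw [hY0, hadd X c, hc] at this
      linarith
    obtain ⟨p, hpΔ, hp⟩ := exists_functional' ℙ e he h0
    have hfin : ℙ A < ⊤ := measure_lt_top ℙ A
    have htR : (ℙ A).toReal ≠ 0 := by
      simp [ENNReal.toReal_eq_zero_iff, h0, hfin.ne]
    have htRpos : 0 < (ℙ A).toReal := lt_of_le_of_ne ENNReal.toReal_nonneg (Ne.symm htR)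
    have hAm : MeasurableSet A := by
      have := (Lp.stronglyMeasurable Z).measurable
      exact measurableSet_lt measurable_const this
    have hint : c * (ℙ A).toReal ≤ ∫ ω in A, Z ω ∂ℙ := by
      have := setIntegral_ge_of_const_le_real hAm hfin.ne (fun ω hω => le_of_lt hω)
        (linf_integrable Z).integrableOn
      exact this
    have hpZ : c ≤ p Z := by
      rw [hp Z]
      calc c = (ℙ A).toReal⁻¹ * (c * (ℙ A).toReal) := by field_simp
        _ ≤ (ℙ A).toReal⁻¹ * ∫ ω in A, Z ω ∂ℙ :=
          mul_le_mul_of_nonneg_left hint (by positivity)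
    have hmem : p Z ∈ {s : ℝ | ∃ p : Lp ℝ ⊤ ℙ →L[ℝ] ℝ,
        (p e = 1 ∧ ∀ Z : Lp ℝ ⊤ ℙ, 0 ≤ Z → 0 ≤ p Z) ∧ s = p (Y - X)} :=
      ⟨p, hpΔ, rfl⟩
    have := hG.2 hmem
    rw [hc] at hpZ
    linarith
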